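/- Let A ∈ ℝ^{n×n} be symmetric positive semidefinite with columns a₁,…,a_n, let B ∈ ℝ^{m×n} have columns b₁,…,b_n, let D ∈ ℝ^{m×n} have columns d₁,…,d_n, and define F(D) = (1/2)Tr(DᵀD A) − Tr(Dᵀ B). Fix an index j with A_{jj} > 0 and set u = d_j + (1/A_{jj})(b_j − D a_j) ∈ ℝ^m. Then the vector d* = u / max(‖u‖₂, 1) is the unique minimizer, over the closed unit ball {d ∈ ℝ^m : ‖d‖₂ ≤ 1}, of the function d ↦ F(D(d)), where D(d) denotes the matrix obtained from D by replacing its j-th column with d while keeping all other columns fixed. -/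

import Mathlib

open Matrix BigOperators

private lemma dsum_split {n : ℕ} (j : Fin n) (f : Fin n → Fin n → ℝ) :
    (∑ k, ∑ l, f k l) = f j j + ∑ l ∈ Finset.univ.erase j, f j l
      + ∑ k ∈ Finset.univ.erase j, f k j
      + ∑ k ∈ Finset.univ.erase j, ∑ l ∈ Finset.univ.erase j, f k l := by
  rw [← Finset.add_sum_erase _ _ (Finset.mem_univ j),
      ← Finset.add_sum_erase _ (fun l => f j l) (Finset.mem_univ j)]
  have : ∀ k ∈ Finset.univ.erase j, (∑ l, f k l) = f k j + ∑ l ∈ Finset.univ.erase j, f k l := by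
    intro k _
    rw [← Finset.add_sum_erase _ _ (Finset.mem_univ j)]
  rw [Finset.sum_congr rfl this, Finset.sum_add_distrib]
  ring


/-- Block coordinate (single-column) update of the dictionary-updating stage: for a
symmetric positive semidefinite `A` with `A_{jj} > 0`, with
`u = d_j + (1/A_{jj})(b_j − D a_j)`, the vector `d* = u / max(‖u‖₂, 1)` is the unique
minimizer, over the closed Euclidean unit ball, of `d ↦ F(D(d))` where `D(d)` replaces
the `j`-th column of `D` by `d` and `F(D) = (1/2)Tr(DᵀD A) − Tr(Dᵀ B)`. -/
theorem column_update_unique_minimizer {m n : ℕ}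
    (A : Matrix (Fin n) (Fin n) ℝ) (hA : A.PosSemidef)
    (B D : Matrix (Fin m) (Fin n) ℝ)
    (F : Matrix (Fin m) (Fin n) ℝ → ℝ)
    (hF : ∀ E : Matrix (Fin m) (Fin n) ℝ,
      F E = (1 / 2) * (Eᵀ * E * A).trace - (Eᵀ * B).trace)
    (j : Fin n) (hj : 0 < A j j)
    (u : Fin m → ℝ)
    (hu : u = (fun i => D i j)
      + (1 / A j j) • ((fun i => B i j) - D.mulVec fun l => A l j))
    (dstar : Fin m → ℝ)
    (hdstar : dstar = (max (Real.sqrt (∑ i, u i ^ 2)) 1)⁻¹ • u) :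
    Real.sqrt (∑ i, dstar i ^ 2) ≤ 1 ∧
      ∀ d : Fin m → ℝ, Real.sqrt (∑ i, d i ^ 2) ≤ 1 → d ≠ dstar →
        F (D.updateCol j dstar) < F (D.updateCol j d) := by
  have hsym : ∀ k l, A k l = A l k := by
    intro k l
    have := hA.1
    rw [Matrix.IsHermitian] at this
    conv_lhs => rw [← this]
    simp [Matrix.conjTranspose_apply]
  set r : ℝ := max (Real.sqrt (∑ i, u i ^ 2)) 1 with hr
  have hr1 : (1 : ℝ) ≤ r := le_max_right _ _
  have hr0 : (0 : ℝ) < r := lt_of_lt_of_le one_pos hr1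
  have hru : Real.sqrt (∑ i, u i ^ 2) ≤ r := le_max_left _ _
  -- column c
  set c : Fin m → ℝ := fun i => ∑ l ∈ Finset.univ.erase j, D i l * A l j with hc
  have hrel : ∀ i, c i = B i j - A j j * u i := by
    intro i
    have hui : u i = D i j + (1 / A j j) * (B i j - ∑ l, D i l * A l j) := by
      rw [hu]; simp [Matrix.mulVec, dotProduct]
    have hsplit : (∑ l, D i l * A l j) = D i j * A j j + c i := by
      rw [hc, ← Finset.add_sum_erase _ (fun l => D i l * A l j) (Finset.mem_univ j)]
    rw [hui]
    field_simp
    rw [hsplit]; ring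
  -- trace expansions
  have trace1 : ∀ d : Fin m → ℝ,
      ((D.updateCol j d)ᵀ * (D.updateCol j d) * A).trace
      = (∑ i, d i ^ 2) * A j j + 2 * ∑ i, d i * c i
        + ∑ k ∈ Finset.univ.erase j, ∑ l ∈ Finset.univ.erase j,
            (∑ i, D i k * D i l) * A l k := by
    intro d
    have h1 : ((D.updateCol j d)ᵀ * (D.updateCol j d) * A).trace
        = ∑ k, ∑ l, (∑ i, (D.updateCol j d) i k * (D.updateCol j d) i l) * A l k := by
      simp [Matrix.trace, Matrix.mul_apply, Finset.sum_mul]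
    rw [h1, dsum_split j]
    have e1 : (∑ i, (D.updateCol j d) i j * (D.updateCol j d) i j) * A j j
        = (∑ i, d i ^ 2) * A j j := by
      simp [Matrix.updateCol_apply, sq]
    have e2 : ∑ l ∈ Finset.univ.erase j,
        (∑ i, (D.updateCol j d) i j * (D.updateCol j d) i l) * A l j
        = ∑ i, d i * c i := by
      have step : ∀ l ∈ Finset.univ.erase j,
          (∑ i, (D.updateCol j d) i j * (D.updateCol j d) i l) * A l j
          = ∑ i, d i * (D i l * A l j) := by
        intro l hl
        have hlj : l ≠ j := (Finset.mem_erase.mp hl).1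
        rw [Finset.sum_mul]
        refine Finset.sum_congr rfl fun i _ => ?_
        simp [Matrix.updateCol_apply, hlj]; ring
      rw [Finset.sum_congr rfl step, Finset.sum_comm]
      exact Finset.sum_congr rfl fun i _ => by simp only [hc, Finset.mul_sum]
    have e3 : ∑ k ∈ Finset.univ.erase j,
        (∑ i, (D.updateCol j d) i k * (D.updateCol j d) i j) * A j k
        = ∑ i, d i * c i := by
      have step : ∀ k ∈ Finset.univ.erase j,
          (∑ i, (D.updateCol j d) i k * (D.updateCol j d) i j) * A j k
          = ∑ i, d i * (D i k * A k j) := by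
        intro k hk
        have hkj : k ≠ j := (Finset.mem_erase.mp hk).1
        rw [hsym j k, Finset.sum_mul]
        refine Finset.sum_congr rfl fun i _ => ?_
        simp [Matrix.updateCol_apply, hkj]; ring
      rw [Finset.sum_congr rfl step, Finset.sum_comm]
      exact Finset.sum_congr rfl fun i _ => by simp only [hc, Finset.mul_sum]
    have e4 : ∑ k ∈ Finset.univ.erase j, ∑ l ∈ Finset.univ.erase j,
        (∑ i, (D.updateCol j d) i k * (D.updateCol j d) i l) * A l k
        = ∑ k ∈ Finset.univ.erase j, ∑ l ∈ Finset.univ.erase j,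
            (∑ i, D i k * D i l) * A l k := by
      refine Finset.sum_congr rfl fun k hk => Finset.sum_congr rfl fun l hl => ?_
      have hkj : k ≠ j := (Finset.mem_erase.mp hk).1
      have hlj : l ≠ j := (Finset.mem_erase.mp hl).1
      simp [Matrix.updateCol_apply, hkj, hlj]
    rw [e1, e2, e3, e4]; ring
  have trace2 : ∀ d : Fin m → ℝ,
      ((D.updateCol j d)ᵀ * B).trace
      = (∑ i, d i * B i j) + ∑ k ∈ Finset.univ.erase j, ∑ i, D i k * B i k := by
    intro d
    have h1 : ((D.updateCol j d)ᵀ * B).trace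
        = ∑ k, ∑ i, (D.updateCol j d) i k * B i k := by
      simp [Matrix.trace, Matrix.mul_apply]
    rw [h1, ← Finset.add_sum_erase _ _ (Finset.mem_univ j)]
    congr 1
    · simp [Matrix.updateCol_apply]
    · refine Finset.sum_congr rfl fun k hk => Finset.sum_congr rfl fun i _ => ?_
      have hkj : k ≠ j := (Finset.mem_erase.mp hk).1
      simp [Matrix.updateCol_apply, hkj]
  -- key quadratic identity
  set C : ℝ := 1 / 2 * (∑ k ∈ Finset.univ.erase j, ∑ l ∈ Finset.univ.erase j,
        (∑ i, D i k * D i l) * A l k)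
      - (∑ k ∈ Finset.univ.erase j, ∑ i, D i k * B i k)
      - A j j / 2 * ∑ i, u i ^ 2 with hC
  have key : ∀ d : Fin m → ℝ,
      F (D.updateCol j d) = A j j / 2 * ∑ i, (d i - u i) ^ 2 + C := by
    intro d
    rw [hF, trace1 d, trace2 d, hC]
    have expand : ∑ i, (d i - u i) ^ 2
        = ∑ i, d i ^ 2 - 2 * ∑ i, d i * u i + ∑ i, u i ^ 2 := by
      rw [show (2:ℝ) * ∑ i, d i * u i = ∑ i, 2 * (d i * u i) from Finset.mul_sum _ _ _,
        ← Finset.sum_sub_distrib, ← Finset.sum_add_distrib]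
      exact Finset.sum_congr rfl fun i _ => by ring
    have hdc : ∑ i, d i * c i = ∑ i, d i * B i j - A j j * ∑ i, d i * u i := by
      rw [show A j j * ∑ i, d i * u i = ∑ i, A j j * (d i * u i) from Finset.mul_sum _ _ _,
        ← Finset.sum_sub_distrib]
      exact Finset.sum_congr rfl fun i _ => by rw [hrel i]; ring
    rw [expand, hdc]; ring
  -- geometry
  have hCS : ∀ d : Fin m → ℝ, ∑ i, d i * u i
      ≤ Real.sqrt (∑ i, d i ^ 2) * Real.sqrt (∑ i, u i ^ 2) := by
    intro d
    calc ∑ i, d i * u i ≤ |∑ i, d i * u i| := le_abs_self _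
      _ = Real.sqrt ((∑ i, d i * u i) ^ 2) := (Real.sqrt_sq_eq_abs _).symm
      _ ≤ Real.sqrt ((∑ i, d i ^ 2) * ∑ i, u i ^ 2) :=
          Real.sqrt_le_sqrt (Finset.sum_mul_sq_le_sq_mul_sq _ _ _)
      _ = _ := Real.sqrt_mul (Finset.sum_nonneg fun i _ => sq_nonneg _) _
  have hstar_norm : Real.sqrt (∑ i, dstar i ^ 2) ≤ 1 := by
    have : ∑ i, dstar i ^ 2 = r⁻¹ ^ 2 * ∑ i, u i ^ 2 := by
      rw [hdstar, Finset.mul_sum]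
      exact Finset.sum_congr rfl fun i _ => by simp [Pi.smul_apply, smul_eq_mul]; ring
    rw [this, Real.sqrt_mul (sq_nonneg _), Real.sqrt_sq (by positivity)]
    calc r⁻¹ * Real.sqrt (∑ i, u i ^ 2) ≤ r⁻¹ * r := by
          exact mul_le_mul_of_nonneg_left hru (by positivity)
      _ = 1 := inv_mul_cancel₀ hr0.ne'
  refine ⟨hstar_norm, fun d hd hne => ?_⟩
  rw [key d, key dstar]
  have hgeom : ∑ i, (dstar i - u i) ^ 2 < ∑ i, (d i - u i) ^ 2 := by
    set v : Fin m → ℝ := fun i => d i - dstar i with hv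
    have hvne : ∃ i, v i ≠ 0 := by
      by_contra h
      push_neg at h
      exact hne (funext fun i => by have := h i; rw [hv] at this; simp at this; linarith)
    obtain ⟨i0, hi0⟩ := hvne
    have hvpos : 0 < ∑ i, v i ^ 2 := by
      have h1 : 0 < v i0 ^ 2 := by positivity
      have h2 : v i0 ^ 2 ≤ ∑ i, v i ^ 2 :=
        Finset.single_le_sum (fun i _ => sq_nonneg (v i)) (Finset.mem_univ i0)
      linarith
    have hdecomp : ∑ i, (d i - u i) ^ 2
        = ∑ i, (dstar i - u i) ^ 2 + ∑ i, v i ^ 2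
          + 2 * (r⁻¹ - 1) * ∑ i, v i * u i := by
      have : ∀ i, (d i - u i) ^ 2
          = (dstar i - u i) ^ 2 + v i ^ 2 + 2 * (r⁻¹ - 1) * (v i * u i) := by
        intro i
        have hd_i : d i = v i + dstar i := by rw [hv]; ring
        have hds : dstar i = r⁻¹ * u i := by rw [hdstar]; simp
        rw [hd_i, hds]; ring
      rw [Finset.sum_congr rfl fun i _ => this i, Finset.sum_add_distrib,
        Finset.sum_add_distrib, Finset.mul_sum]
    have hcross : 0 ≤ 2 * (r⁻¹ - 1) * ∑ i, v i * u i := by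
      rcases le_or_gt (Real.sqrt (∑ i, u i ^ 2)) 1 with hle | hgt
      · have : r = 1 := max_eq_right hle
        simp [this]
      · have hreq : r = Real.sqrt (∑ i, u i ^ 2) := max_eq_left hgt.le
        have hrsq : r ^ 2 = ∑ i, u i ^ 2 := by
          rw [hreq, Real.sq_sqrt (Finset.sum_nonneg fun i _ => sq_nonneg _)]
        have hvu : ∑ i, v i * u i ≤ 0 := by
          have h1 : ∑ i, d i * u i ≤ r := by
            calc ∑ i, d i * u i ≤ Real.sqrt (∑ i, d i ^ 2) * Real.sqrt (∑ i, u i ^ 2) := hCS d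
              _ ≤ 1 * r := by
                  apply mul_le_mul hd (le_of_eq hreq.symm) (Real.sqrt_nonneg _) zero_le_one
              _ = r := one_mul r
          have h2 : ∑ i, dstar i * u i = r := by
            have : ∑ i, dstar i * u i = r⁻¹ * ∑ i, u i ^ 2 := by
              rw [hdstar, Finset.mul_sum]
              exact Finset.sum_congr rfl fun i _ => by simp [sq]; ring
            rw [this, ← hrsq]
            field_simp
          have h3 : ∑ i, v i * u i = ∑ i, d i * u i - ∑ i, dstar i * u i := by
            rw [← Finset.sum_sub_distrib]
            exact Finset.sum_congr rfl fun i _ => by rw [hv]; ring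
          rw [h3, h2]; linarith
        have hrinv : r⁻¹ - 1 ≤ 0 := by
          have : r⁻¹ ≤ 1 := by
            rw [inv_le_one_iff₀]; right; exact hr1
          linarith
        nlinarith [hvu, hrinv]
    linarith [hdecomp, hvpos, hcross]
  have : 0 < A j j / 2 := by linarith
  nlinarith [hgeom]
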